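/- For a full-rank lattice L ⊂ ℝ^n with basis b₁,…,bₙ and Gram–Schmidt norms ‖b_i*‖, and for a vector v = Σ x_i b_i with x_i ∈ ℤ and target t = Σ t_i b_i, the squared distance decomposes as ‖v − t‖² = Σ_{k=1}^n (x_k − c_k)²·‖b_k*‖², where c_k = t_k + Σ_{i>k} (t_i − x_i)·μ_{ik} and μ_{ik} = ⟨b_i, b_k*⟩/‖b_k*‖². -/

import Mathlib

/-- Mathlib's Gram–Schmidt orthogonalization, specialized to vectors in `ℝ^n`
indexed by `Fin n` (the specialization helps typeclass inference). -/
noncomputable def gramSchmidtFin {n : ℕ} (b : Fin n → EuclideanSpace ℝ (Fin n)) :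
    Fin n → EuclideanSpace ℝ (Fin n) :=
  @InnerProductSpace.gramSchmidt ℝ (EuclideanSpace ℝ (Fin n)) _ _ _ (Fin n) _ _ IsWellOrder.toIsWellFounded b

/-- The orthogonal decomposition underlying Schnorr–Euchner enumeration: for a basis
`b₁, …, bₙ`, `v = Σ xᵢ bᵢ` with `xᵢ ∈ ℤ` and target `t = Σ tᵢ bᵢ`,
`‖v − t‖² = Σₖ (xₖ − cₖ)²·‖bₖ*‖²` where `cₖ = tₖ + Σ_{i>k} (tᵢ − xᵢ)·μᵢₖ` and
`μᵢₖ = ⟨bᵢ, bₖ*⟩/‖bₖ*‖²`. -/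
theorem enum_decomposition {n : ℕ} (b : Fin n → EuclideanSpace ℝ (Fin n))
    (hb : LinearIndependent ℝ b) (x : Fin n → ℤ) (t : Fin n → ℝ) :
    ‖(∑ i, (x i : ℝ) • b i) - ∑ i, t i • b i‖ ^ 2 =
      ∑ k, ((x k : ℝ) - (t k + ∑ i ∈ Finset.univ.filter (fun i => k < i),
          (t i - (x i : ℝ)) *
            ((inner ℝ (b i) (gramSchmidtFin b k) : ℝ) / ‖gramSchmidtFin b k‖ ^ 2))) ^ 2 *
        ‖gramSchmidtFin b k‖ ^ 2 := by
  classical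
  haveI : WellFoundedLT (Fin n) := IsWellOrder.toIsWellFounded
  unfold gramSchmidtFin
  set gs := @InnerProductSpace.gramSchmidt ℝ (EuclideanSpace ℝ (Fin n)) _ _ _ (Fin n) _ _
    IsWellOrder.toIsWellFounded b with hgsdef
  set d := (∑ i, (x i : ℝ) • b i) - ∑ i, t i • b i with hd
  have hdsum : d = ∑ i, ((x i : ℝ) - t i) • b i := by
    rw [hd, ← Finset.sum_sub_distrib]
    simp [sub_smul]
  have hcard : Module.finrank ℝ (EuclideanSpace ℝ (Fin n)) = Fintype.card (Fin n) := by simp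
  set e := InnerProductSpace.gramSchmidtOrthonormalBasis hcard b with he
  have hne : ∀ k, gs k ≠ 0 := fun k => InnerProductSpace.gramSchmidt_ne_zero k hb
  have hN : ∀ k, ‖gs k‖ ^ 2 ≠ 0 := fun k => pow_ne_zero _ (norm_ne_zero_iff.2 (hne k))
  have heapp : ∀ k, e k = (‖gs k‖⁻¹ : ℝ) • gs k := by
    intro k
    have h1 : InnerProductSpace.gramSchmidtNormed ℝ b k ≠ 0 := by
      simp only [InnerProductSpace.gramSchmidtNormed]
      exact smul_ne_zero (by simpa using norm_ne_zero_iff.2 (hne k)) (hne k)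
    rw [he, InnerProductSpace.gramSchmidtOrthonormalBasis_apply hcard h1]
    simp [InnerProductSpace.gramSchmidtNormed]
    rfl
  -- Parseval
  have hpar : ‖d‖ ^ 2 = ∑ k, (inner ℝ (e k) d : ℝ) ^ 2 := by
    have h0 : ‖d‖ = ‖e.repr d‖ := (e.repr.norm_map d).symm
    rw [h0, EuclideanSpace.norm_eq, Real.sq_sqrt (by positivity)]
    simp [OrthonormalBasis.repr_apply_apply, Real.norm_eq_abs, sq_abs]
  -- inner of gs k with b k is its norm squared
  have hself : ∀ k, (inner ℝ (gs k) (b k) : ℝ) = ‖gs k‖ ^ 2 := by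
    intro k
    nth_rewrite 1 [InnerProductSpace.gramSchmidt_def'' ℝ b k]
    rw [← hgsdef]
    rw [inner_add_right, inner_sum, real_inner_self_eq_norm_sq]
    rw [Finset.sum_eq_zero, add_zero]
    intro i hi
    rw [real_inner_smul_right]
    rw [show (inner ℝ (gs k) (gs i) : ℝ) = 0 from
      InnerProductSpace.gramSchmidt_orthogonal ℝ b (Finset.mem_Iio.1 hi).ne', mul_zero]
  -- inner of gs k with d
  have hinner : ∀ k, (inner ℝ (gs k) d : ℝ) =
      ((x k : ℝ) - t k) * ‖gs k‖ ^ 2 +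
        ∑ i ∈ Finset.univ.filter (fun i => k < i),
          ((x i : ℝ) - t i) * (inner ℝ (gs k) (b i) : ℝ) := by
    intro k
    rw [hdsum, inner_sum]
    simp_rw [real_inner_smul_right]
    rw [← Finset.sum_filter_add_sum_filter_not Finset.univ (fun i => k < i)]
    rw [add_comm]
    congr 1
    rw [Finset.sum_eq_single_of_mem k (by simp)]
    · rw [hself]
    · intro i hi hik
      have hlt : i < k := lt_of_le_of_ne (by simpa using (Finset.mem_filter.1 hi).2) hik
      rw [show (inner ℝ (gs k) (b i) : ℝ) = 0 from InnerProductSpace.gramSchmidt_inv_triangular ℝ b hlt, mul_zero]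
  rw [hpar]
  refine Finset.sum_congr rfl fun k _ => ?_
  have hek : (inner ℝ (e k) d : ℝ) = ‖gs k‖⁻¹ * (inner ℝ (gs k) d : ℝ) := by
    rw [heapp k, real_inner_smul_left]
  have hμ : ∀ i : Fin n, (inner ℝ (b i) (gs k) : ℝ) = (inner ℝ (gs k) (b i) : ℝ) := fun i =>
    real_inner_comm _ _
  simp_rw [hμ]
  have hsum : ∑ i ∈ Finset.univ.filter (fun i => k < i),
      (t i - (x i : ℝ)) * ((inner ℝ (gs k) (b i) : ℝ) / ‖gs k‖ ^ 2) =
      -((∑ i ∈ Finset.univ.filter (fun i => k < i),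
        ((x i : ℝ) - t i) * (inner ℝ (gs k) (b i) : ℝ)) / ‖gs k‖ ^ 2) := by
    rw [Finset.sum_div, ← Finset.sum_neg_distrib]
    exact Finset.sum_congr rfl fun i _ => by ring
  have hC : (x k : ℝ) - (t k + ∑ i ∈ Finset.univ.filter (fun i => k < i),
      (t i - (x i : ℝ)) * ((inner ℝ (gs k) (b i) : ℝ) / ‖gs k‖ ^ 2)) =
      (inner ℝ (gs k) d : ℝ) / ‖gs k‖ ^ 2 := by
    rw [hsum, hinner k, add_div, mul_div_assoc, div_self (hN k), mul_one]
    ring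
  rw [hek, hC]
  have hn0 : ‖gs k‖ ≠ 0 := norm_ne_zero_iff.2 (hne k)
  field_simp
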